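/- arXiv:1610.02990 — 2 statements merged into one kernel-verified Lean document; each statement's English description precedes it below -/
import Mathlib

section
/- Let G ⊆ PGL_n(k) be a finite p-group with p > n, where k is algebraically closed of characteristic 0. Then G has a fixed point on P^{n−1}. -/
open scoped MatrixGroups

universe u v w


/-- Vectors with pairwise distinct "weights" under a family of operators are
linearly independent. -/
lemma weight_li {k V S ι : Type*} [Field k] [AddCommGroup V] [Module k V]
    (π : S → (V →ₗ[k] V)) (w : ι → S → k) (v : ι → V)
    (hv : ∀ i, v i ≠ 0) (hwv : ∀ i s, π s (v i) = w i s • v i)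
    (hw : Function.Injective w) : LinearIndependent k v := by
  classical
  rw [linearIndependent_iff']
  intro t
  induction t using Finset.induction_on with
  | empty => simp
  | @insert a s ha IH =>
    intro g hsum i hi
    have key : ∀ j ∈ s, g j = 0 := by
      intro j hj
      have hne : w j ≠ w a := fun e => ha (hw e ▸ hj)
      obtain ⟨s₀, hs₀⟩ : ∃ s₀, w j s₀ ≠ w a s₀ := by
        by_contra h; push_neg at h; exact hne (funext h)
      have h2 : ∑ i ∈ s, (g i * (w i s₀ - w a s₀)) • v i = 0 := by
        have hL : ((π s₀ - w a s₀ • LinearMap.id : V →ₗ[k] V))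
            (∑ i ∈ insert a s, g i • v i) = 0 := by
          rw [hsum, map_zero]
        rw [map_sum] at hL
        have heq : ∀ i ∈ insert a s,
            (π s₀ - w a s₀ • LinearMap.id : V →ₗ[k] V) (g i • v i)
              = (g i * (w i s₀ - w a s₀)) • v i := by
          intro i _
          simp only [LinearMap.sub_apply, LinearMap.smul_apply, LinearMap.id_apply,
            map_smul, hwv]
          rw [← sub_smul, smul_smul]
        rw [Finset.sum_congr rfl heq, Finset.sum_insert ha] at hL
        rw [sub_self, mul_zero, zero_smul, zero_add] at hL
        exact hL
      have := IH (fun i => g i * (w i s₀ - w a s₀)) h2 j hj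
      rcases mul_eq_zero.mp this with h | h
      · exact h
      · exact absurd (sub_eq_zero.mp h) hs₀
    have hsum' : g a • v a = 0 := by
      rw [Finset.sum_insert ha] at hsum
      have : ∑ i ∈ s, g i • v i = 0 :=
        Finset.sum_eq_zero fun j hj => by rw [key j hj, zero_smul]
      rwa [this, add_zero] at hsum
    have hga : g a = 0 := by
      rcases smul_eq_zero.mp hsum' with h | h
      · exact h
      · exact absurd h (hv a)
    rcases Finset.mem_insert.mp hi with rfl | h
    · exact hga
    · exact key i h

/-- A linear map which preserves all lines is a scalar multiple of the identity. -/
lemma eq_smul_of_forall_smul {k V : Type*} [Field k] [AddCommGroup V] [Module k V]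
    (f : V →ₗ[k] V) (hf : ∀ v : V, v ≠ 0 → ∃ c : k, f v = c • v)
    (v₀ : V) (hv₀ : v₀ ≠ 0) : ∃ c : k, ∀ v, f v = c • v := by
  obtain ⟨c₀, hc₀⟩ := hf v₀ hv₀
  refine ⟨c₀, fun v => ?_⟩
  by_cases hv : v = 0
  · simp [hv]
  by_cases hsp : ∃ a : k, v = a • v₀
  · obtain ⟨a, rfl⟩ := hsp
    rw [map_smul, hc₀, smul_comm]
  · obtain ⟨c, hc⟩ := hf v hv
    have hvv : v₀ + v ≠ 0 := by
      intro h
      exact hsp ⟨-1, by rw [neg_smul, one_smul, eq_neg_of_add_eq_zero_right h]⟩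
    obtain ⟨c', hc'⟩ := hf (v₀ + v) hvv
    rw [map_add, hc₀, hc, smul_add] at hc'
    have hkey : (c₀ - c') • v₀ = (c' - c) • v := by
      rw [sub_smul, sub_smul, sub_eq_sub_iff_add_eq_add, hc']
      abel
    by_cases hcc : c' = c
    · have h0 : (c₀ - c') • v₀ = 0 := by rw [hkey, hcc, sub_self, zero_smul]
      have h1 : c₀ = c' := by
        rcases smul_eq_zero.mp h0 with h | h
        · exact sub_eq_zero.mp h
        · exact absurd h hv₀
      rw [hc, h1, hcc]
    · exfalso
      apply hsp
      refine ⟨(c' - c)⁻¹ * (c₀ - c'), ?_⟩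
      rw [mul_smul, hkey, smul_smul, inv_mul_cancel₀ (sub_ne_zero.mpr hcc), one_smul]

noncomputable def restrictHom {k : Type*} [Field k] {V : Type*} [AddCommGroup V] [Module k V]
    {G : Type*} [Group G] (ρ : G →* (V ≃ₗ[k] V)) (E : Submodule k V)
    (hE : ∀ (a : G), ∀ v ∈ E, ρ a v ∈ E) : G →* (E ≃ₗ[k] E) :=
  MonoidHom.mk'
    (fun a => LinearEquiv.ofLinear
      ((ρ a : V →ₗ[k] V).restrict (hE a))
      ((ρ a⁻¹ : V →ₗ[k] V).restrict (hE a⁻¹))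
      (by
        apply LinearMap.ext; rintro ⟨x, hx⟩
        apply Subtype.ext
        simp only [LinearMap.comp_apply, LinearMap.id_apply, LinearMap.restrict_coe_apply]
        have h1 : (ρ a) ((ρ a⁻¹) x) = (ρ (a * a⁻¹)) x := by rw [map_mul]; rfl
        have h2 : (ρ (a * a⁻¹)) x = x := by rw [mul_inv_cancel, map_one]; rfl
        exact h1.trans h2)
      (by
        apply LinearMap.ext; rintro ⟨x, hx⟩
        apply Subtype.ext
        simp only [LinearMap.comp_apply, LinearMap.id_apply, LinearMap.restrict_coe_apply]
        have h1 : (ρ a⁻¹) ((ρ a) x) = (ρ (a⁻¹ * a)) x := by rw [map_mul]; rfl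
        have h2 : (ρ (a⁻¹ * a)) x = x := by rw [inv_mul_cancel, map_one]; rfl
        exact h1.trans h2))
    (by
      intro a b
      apply LinearEquiv.ext; rintro ⟨x, hx⟩
      apply Subtype.ext
      show ρ (a * b) x = ρ a (ρ b x)
      rw [map_mul]; rfl)

lemma restrictHom_coe {k : Type*} [Field k] {V : Type*} [AddCommGroup V] [Module k V]
    {G : Type*} [Group G] (ρ : G →* (V ≃ₗ[k] V)) (E : Submodule k V)
    (hE : ∀ (a : G), ∀ v ∈ E, ρ a v ∈ E) (a : G) (x : E) :
    ((restrictHom ρ E hE a x : E) : V) = ρ a (x : V) := rfl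

/-- Main induction: a finite `p`-group acting linearly on a space of dimension `< p`
over an algebraically closed field has a common eigenvector. -/
lemma mainL {k : Type u} [Field k] [IsAlgClosed k] {p : ℕ} (hp : p.Prime)
    (V : Type v) [AddCommGroup V] [Module k V] [FiniteDimensional k V]
    (G : Type w) [Group G] [Finite G] (hG : IsPGroup p G)
    (hd0 : 0 < Module.finrank k V) (hdp : Module.finrank k V < p)
    (ρ : G →* (V ≃ₗ[k] V)) :
    ∃ v : V, v ≠ 0 ∧ ∀ a : G, ∃ c : k, ρ a v = c • v := by
  classical
  haveI := Fact.mk hp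
  haveI hnt : Nontrivial V := Module.nontrivial_of_finrank_pos hd0
  set δ : G →* kˣ := LinearEquiv.det.comp ρ with hδ
  -- Step 1: a common eigenvector for the kernel of the determinant character
  have step1 : ∃ v₀ : V, v₀ ≠ 0 ∧ ∀ h : δ.ker, ∃ c : k, ρ (h : G) v₀ = c • v₀ := by
    set H₀ := δ.ker with hH₀
    set ρ₀ : H₀ →* (V ≃ₗ[k] V) := ρ.comp H₀.subtype with hρ₀
    set Q := H₀ ⧸ ρ₀.ker with hQdef
    set ρQ : Q →* (V ≃ₗ[k] V) := QuotientGroup.kerLift ρ₀ with hρQ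
    have hρQinj : Function.Injective ρQ := QuotientGroup.kerLift_injective ρ₀
    have hQp : IsPGroup p Q := (hG.to_subgroup H₀).to_quotient ρ₀.ker
    have key : ∃ v₀ : V, v₀ ≠ 0 ∧ ∀ q : Q, ∃ c : k, ρQ q v₀ = c • v₀ := by
      rcases subsingleton_or_nontrivial Q with hQ | hQ
      · obtain ⟨v₀, hv₀⟩ := exists_ne (0 : V)
        refine ⟨v₀, hv₀, fun q => ⟨1, ?_⟩⟩
        rw [Subsingleton.elim q 1, map_one, one_smul]; rfl
      · haveI : Nontrivial (Subgroup.center Q) := hQp.center_nontrivial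
        obtain ⟨z, hz1⟩ := exists_ne (1 : Subgroup.center Q)
        have hdet : LinearEquiv.det (ρQ (z : Q)) = 1 := by
          obtain ⟨h, hh⟩ := QuotientGroup.mk'_surjective ρ₀.ker (z : Q)
          have h1 : ρQ (z : Q) = ρ₀ h := by rw [← hh]; exact QuotientGroup.kerLift_mk ρ₀ h
          rw [h1]
          exact h.2
        have hns : ¬ ∃ c : k, ∀ v : V, ρQ (z : Q) v = c • v := by
          rintro ⟨ω, hω⟩
          have hlin : ((ρQ (z : Q) : V →ₗ[k] V)) = ω • LinearMap.id :=
            LinearMap.ext fun v => by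
              simp only [LinearMap.smul_apply, LinearMap.id_apply]; exact hω v
          have hωd : ω ^ Module.finrank k V = 1 := by
            have h2 : LinearMap.det ((ρQ (z : Q) : V →ₗ[k] V)) = 1 := by
              rw [← LinearEquiv.coe_det, hdet]; rfl
            rwa [hlin, LinearMap.det_smul, LinearMap.det_id, mul_one] at h2
          obtain ⟨t, ht⟩ := hQp (z : Q)
          have hpowv : ∀ (m : ℕ) (v : V), (ρQ ((z : Q) ^ m)) v = ω ^ m • v := by
            intro m
            induction m with
            | zero => intro v; rw [pow_zero, map_one, pow_zero, one_smul]; rfl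
            | succ m ih =>
              intro v
              rw [pow_succ, map_mul]
              have : (ρQ ((z:Q) ^ m) * ρQ (z:Q)) v = ρQ ((z:Q)^m) (ρQ (z:Q) v) := rfl
              rw [this, hω, map_smul, ih, smul_smul, ← pow_succ']
          have hωpt : ω ^ (p ^ t) = 1 := by
            obtain ⟨v₁, hv₁⟩ := exists_ne (0 : V)
            have h4 := hpowv (p ^ t) v₁
            rw [ht, map_one] at h4
            have h5 : ω ^ p ^ t • v₁ = v₁ := by rw [← h4]; rfl
            have h6 : (ω ^ p ^ t - 1) • v₁ = 0 := by rw [sub_smul, one_smul, h5, sub_self]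
            rcases smul_eq_zero.mp h6 with h | h
            · exact sub_eq_zero.mp h
            · exact absurd h hv₁
          have hcop : Nat.Coprime (Module.finrank k V) (p ^ t) := by
            have hpd : Nat.Coprime p (Module.finrank k V) :=
              hp.coprime_iff_not_dvd.mpr
                (fun hdvd => absurd (Nat.le_of_dvd hd0 hdvd) (not_le.mpr hdp))
            exact (Nat.Coprime.pow_right t hpd.symm)
          have hω1 : ω = 1 := by
            have o1 : orderOf ω ∣ Module.finrank k V := orderOf_dvd_of_pow_eq_one hωd
            have o2 : orderOf ω ∣ p ^ t := orderOf_dvd_of_pow_eq_one hωpt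
            have : orderOf ω ∣ 1 := hcop ▸ Nat.dvd_gcd o1 o2
            exact orderOf_eq_one_iff.mp (Nat.eq_one_of_dvd_one this)
          have : ρQ (z : Q) = 1 := by
            apply LinearEquiv.ext; intro v
            rw [hω v, hω1, one_smul]; rfl
          have hz : (z : Q) = 1 := hρQinj (by rw [this, map_one])
          exact hz1 (Subtype.ext hz)
        obtain ⟨lam, hlam⟩ :=
          Module.End.exists_eigenvalue ((ρQ (z : Q) : V →ₗ[k] V) : Module.End k V)
        set E := Module.End.eigenspace ((ρQ (z : Q) : V →ₗ[k] V) : Module.End k V) lam with hE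
        have hEbot : E ≠ ⊥ := hlam
        have hEtop : E ≠ ⊤ := by
          intro htop
          exact hns ⟨lam, fun v =>
            Module.End.mem_eigenspace_iff.mp (Submodule.eq_top_iff'.mp htop v)⟩
        have hEinv : ∀ (a : Q), ∀ v ∈ E, ρQ a v ∈ E := by
          intro a v hv
          rw [hE, Module.End.mem_eigenspace_iff] at hv ⊢
          have hcomm : a * (z : Q) = (z : Q) * a := Subgroup.mem_center_iff.mp z.2 a
          have e1 : ρQ (z : Q) (ρQ a v) = ρQ ((z:Q) * a) v := by rw [map_mul]; rfl
          have e2 : ρQ ((z:Q) * a) v = ρQ a (ρQ (z : Q) v) := by rw [← hcomm, map_mul]; rfl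
          calc (ρQ (z : Q) : V →ₗ[k] V) (ρQ a v) = ρQ (z : Q) (ρQ a v) := rfl
            _ = ρQ a (ρQ (z : Q) v) := by rw [e1, e2]
            _ = ρQ a (lam • v) := by rw [← hv]; rfl
            _ = lam • ρQ a v := by rw [map_smul]
        have hEnontriv : Nontrivial E := Submodule.nontrivial_iff_ne_bot.mpr hEbot
        have hEd0 : 0 < Module.finrank k E := Module.finrank_pos
        have hElt : Module.finrank k E < Module.finrank k V :=
          Submodule.finrank_lt hEtop
        obtain ⟨w, hw0, hw⟩ := mainL hp E Q hQp hEd0 (hElt.trans hdp) (restrictHom ρQ E hEinv)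
        refine ⟨(w : V), by simpa using hw0, fun q => ?_⟩
        obtain ⟨c, hc⟩ := hw q
        refine ⟨c, ?_⟩
        have h6 := congrArg (Subtype.val) hc
        rw [restrictHom_coe] at h6
        simpa using h6
    obtain ⟨v₀, hv₀, hv⟩ := key
    refine ⟨v₀, hv₀, fun h => ?_⟩
    obtain ⟨c, hc⟩ := hv (QuotientGroup.mk h)
    refine ⟨c, ?_⟩
    have : ρQ (QuotientGroup.mk h) = ρ (h : G) := QuotientGroup.kerLift_mk ρ₀ h
    rwa [this] at hc
  -- Step 2: the orbit argument
  obtain ⟨v₀, hv₀, hstep1⟩ := step1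
  choose χ hχ using hstep1
  -- a generator modulo the kernel
  haveI hfr : Finite δ.range := Set.Finite.to_subtype (Set.finite_range δ)
  obtain ⟨cg, hcg⟩ := IsCyclic.exists_generator (α := δ.range)
  obtain ⟨g, hgδ⟩ := cg.2
  have hpow : ∀ a : G, ∃ j : ℕ, δ (g ^ j) = δ a := by
    intro a
    have h1 : (⟨δ a, ⟨a, rfl⟩⟩ : δ.range) ∈ Subgroup.zpowers cg := hcg _
    have h2 : (⟨δ a, ⟨a, rfl⟩⟩ : δ.range) ∈ Submonoid.powers cg := by
      rw [(isOfFinOrder_of_finite cg).mem_powers_iff_mem_zpowers]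
      exact h1
    obtain ⟨j, hj⟩ := h2
    refine ⟨j, ?_⟩
    rw [map_pow, hgδ]
    exact congrArg Subtype.val hj
  have hker : ∀ (h : δ.ker) (x : G), x⁻¹ * (h : G) * x ∈ δ.ker := by
    intro h x
    have hh : δ (h : G) = 1 := h.2
    rw [MonoidHom.mem_ker, map_mul, map_mul, map_inv, hh, mul_one, mul_comm, mul_inv_cancel]
  let κ : δ.ker → δ.ker := fun h => ⟨g⁻¹ * (h : G) * g, hker h g⟩
  have hκval : ∀ (i : ℕ) (h : δ.ker), ((κ^[i] h : δ.ker) : G) = (g ^ i)⁻¹ * (h : G) * g ^ i := by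
    intro i
    induction i with
    | zero => intro h; simp
    | succ i ih =>
      intro h
      rw [Function.iterate_succ_apply']
      show g⁻¹ * ((κ^[i] h : δ.ker) : G) * g = _
      rw [ih]
      group
  have hκsurj : Function.Surjective κ := by
    intro h
    refine ⟨⟨g * (h : G) * g⁻¹, by simpa using hker h g⁻¹⟩, ?_⟩
    apply Subtype.ext
    show g⁻¹ * (g * (h : G) * g⁻¹) * g = (h : G)
    group
  set χs : ℕ → δ.ker → k := fun i => χ ∘ (κ^[i]) with hχs
  obtain ⟨s, hgs⟩ := hG g
  have hκps : κ^[p ^ s] = id := by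
    funext h
    apply Subtype.ext
    rw [hκval, hgs]
    simp
  have hex : ∃ i, 0 < i ∧ χs i = χs 0 := ⟨p ^ s, pow_pos hp.pos s, by
    rw [hχs]; simp [hκps]⟩
  set r := Nat.find hex with hrdef
  obtain ⟨hr0, hrper⟩ := Nat.find_spec hex
  have hcancel : ∀ m, χs m = χs 0 → ∀ a, χs (a + m) = χs a := by
    intro m hm a
    funext h
    have e1 : χs (a + m) h = χ (κ^[m] (κ^[a] h)) := by
      rw [hχs]
      show χ (κ^[a + m] h) = _
      rw [add_comm, Function.iterate_add_apply]
    have e2 : χ (κ^[m] (κ^[a] h)) = χs m (κ^[a] h) := rfl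
    rw [e1, e2, hm]
    rfl
  have hmulr : ∀ q a, χs (a + q * r) = χs a := by
    intro q
    induction q with
    | zero => intro a; simp
    | succ q ih =>
      intro a
      have : a + (q + 1) * r = (a + q * r) + r := by ring
      rw [this, hcancel r hrper, ih]
  have hdvd : r ∣ p ^ s := by
    have h1 : χs (p ^ s % r) = χs 0 := by
      have h2 := hmulr (p ^ s / r) (p ^ s % r)
      rw [Nat.mod_add_div'] at h2
      have h3 : χs (p ^ s) = χs 0 := by rw [hχs]; simp [hκps]
      rw [← h2, h3]
    rcases Nat.eq_zero_or_pos (p ^ s % r) with h0 | hpos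
    · exact Nat.dvd_of_mod_eq_zero h0
    · exact absurd ⟨hpos, h1⟩ (Nat.find_min hex (Nat.mod_lt _ hr0))
  have hr1 : r = 1 := by
    by_contra hr1
    obtain ⟨u, hu_le, hru⟩ := (Nat.dvd_prime_pow hp).mp hdvd
    have hu0 : u ≠ 0 := by
      rintro rfl
      rw [pow_zero] at hru
      exact hr1 hru
    have hpr : p ≤ r := by rw [hru]; exact Nat.le_self_pow hu0 p
    have hκsurj_iter : ∀ i, Function.Surjective (κ^[i]) :=
      fun i => Function.Surjective.iterate hκsurj i
    have hdist : ∀ i j, i < j → j < r → χs i ≠ χs j := by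
      intro i j hij hjr heq
      have hper2 : χs (j - i) = χs 0 := by
        funext h
        obtain ⟨h', rfl⟩ := hκsurj_iter i h
        have e1 : χs (j - i) (κ^[i] h') = χ (κ^[(j - i) + i] h') := by
          rw [Function.iterate_add_apply]; rfl
        have e2 : χ (κ^[(j - i) + i] h') = χs j h' := by
          rw [Nat.sub_add_cancel (le_of_lt hij)]; rfl
        rw [e1, e2, ← heq]
        rfl
      exact (Nat.find_min hex (show j - i < r by omega)) ⟨by omega, hper2⟩
    set vv : Fin r → V := fun i => ρ (g ^ (i : ℕ)) v₀ with hvvdef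
    have hvv : ∀ (i : Fin r) (h : δ.ker),
        (ρ (h : G) : V →ₗ[k] V) (vv i) = χs (i : ℕ) h • vv i := by
      intro i h
      have e : (h : G) * g ^ (i : ℕ) = g ^ (i : ℕ) * ((κ^[(i : ℕ)] h : δ.ker) : G) := by
        rw [hκval]
        group
      have c1 : ρ (h : G) (ρ (g ^ (i : ℕ)) v₀) = ρ ((h : G) * g ^ (i : ℕ)) v₀ := by
        rw [map_mul]; rfl
      have c2 : ρ ((h : G) * g ^ (i : ℕ)) v₀
          = ρ (g ^ (i : ℕ)) (ρ ((κ^[(i : ℕ)] h : δ.ker) : G) v₀) := by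
        rw [e, map_mul]; rfl
      show ρ (h : G) (vv i) = χs (i : ℕ) h • vv i
      rw [hvvdef]
      simp only
      rw [c1, c2, hχ (κ^[(i : ℕ)] h), map_smul]
      rfl
    have hvv0 : ∀ i, vv i ≠ 0 := fun i => by
      rw [hvvdef]
      simp only
      exact (LinearEquiv.map_ne_zero_iff _).mpr hv₀
    have hinj : Function.Injective (fun i : Fin r => χs (i : ℕ)) := by
      intro i j hij
      by_contra hne
      have hne' : (i : ℕ) ≠ (j : ℕ) := fun e => hne (Fin.ext e)
      rcases lt_or_gt_of_ne hne' with h | h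
      · exact hdist _ _ h j.2 hij
      · exact hdist _ _ h i.2 hij.symm
    have hli := weight_li (fun (h : δ.ker) => ((ρ (h : G) : V →ₗ[k] V)))
      (fun i : Fin r => χs (i : ℕ)) vv hvv0 (fun i h => hvv i h) hinj
    have hcard := hli.fintype_card_le_finrank
    rw [Fintype.card_fin] at hcard
    omega
  have hper : ∀ h, χ (κ h) = χ h := by
    intro h
    have h2 : χs 1 = χs 0 := by rw [← hr1]; exact hrper
    have h3 := congrFun h2 h
    simpa [hχs, Function.iterate_one] using h3
  set W : Submodule k V :=
    { carrier := {w : V | ∀ h : δ.ker, ρ (h : G) w = χ h • w}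
      add_mem' := by intro x y hx hy h; rw [map_add, hx h, hy h, smul_add]
      zero_mem' := by intro h; rw [map_zero, smul_zero]
      smul_mem' := by intro c x hx h; rw [map_smul, hx h, smul_comm] } with hWdef
  have hv₀W : v₀ ∈ W := fun h => hχ h
  have hgW : ∀ w ∈ W, ρ g w ∈ W := by
    intro w hw h
    have e : (h : G) * g = g * ((κ h : δ.ker) : G) := by
      show _ = g * (g⁻¹ * (h : G) * g)
      group
    have c1 : ρ (h : G) (ρ g w) = ρ ((h : G) * g) w := by rw [map_mul]; rfl
    have c2 : ρ ((h : G) * g) w = ρ g (ρ ((κ h : δ.ker) : G) w) := by rw [e, map_mul]; rfl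
    show ρ (h : G) (ρ g w) = χ h • ρ g w
    rw [c1, c2, hw (κ h), map_smul, hper]
  haveI : Nontrivial W := ⟨⟨⟨v₀, hv₀W⟩, 0, by simp [Subtype.ext_iff, hv₀]⟩⟩
  set T : Module.End k W := ((ρ g : V →ₗ[k] V)).restrict hgW with hTdef
  obtain ⟨lam, hlam⟩ := Module.End.exists_eigenvalue T
  obtain ⟨uu, huu⟩ := hlam.exists_hasEigenvector
  have hu0 : (uu : V) ≠ 0 := fun e => huu.right (by exact Subtype.ext e)
  have hgu : ρ g (uu : V) = lam • (uu : V) := by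
    have h1 := huu.apply_eq_smul
    have h2 := congrArg Subtype.val h1
    rw [hTdef] at h2
    rw [LinearMap.restrict_coe_apply] at h2
    simpa using h2
  have hgj : ∀ j : ℕ, ρ (g ^ j) (uu : V) = lam ^ j • (uu : V) := by
    intro j
    induction j with
    | zero => rw [pow_zero, map_one, pow_zero, one_smul]; rfl
    | succ j ih =>
      rw [pow_succ, map_mul]
      have e1 : (ρ (g ^ j) * ρ g) (uu : V) = ρ (g ^ j) (ρ g (uu : V)) := rfl
      rw [e1, hgu, map_smul, ih, smul_smul, pow_succ, mul_comm]
  refine ⟨(uu : V), hu0, fun a => ?_⟩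
  obtain ⟨j, hj⟩ := hpow a
  have hm : (g ^ j)⁻¹ * a ∈ δ.ker := by
    rw [MonoidHom.mem_ker, map_mul, map_inv, hj, inv_mul_cancel]
  have ha : a = g ^ j * ((g ^ j)⁻¹ * a) := by group
  refine ⟨χ ⟨(g ^ j)⁻¹ * a, hm⟩ * lam ^ j, ?_⟩
  have c1 : ρ a (uu : V) = ρ (g ^ j) (ρ (((g ^ j)⁻¹ * a)) (uu : V)) := by
    conv_lhs => rw [ha]
    rw [map_mul]; rfl
  have hmem : ∀ h : δ.ker, ρ (h : G) (uu : V) = χ h • (uu : V) := uu.2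
  rw [c1, hmem ⟨(g ^ j)⁻¹ * a, hm⟩, map_smul, hgj, smul_smul]
termination_by Module.finrank k V

/-- The action of an element of `GL_n(k)` on the projective space `P^{n-1}`. -/
noncomputable def glAct {k : Type*} [Field k] {n : ℕ} (A : GL (Fin n) k) :
    Projectivization k (Fin n → k) → Projectivization k (Fin n → k) :=
  Projectivization.map (Matrix.GeneralLinearGroup.toLin A).toLinearEquiv.toLinearMap
    (Matrix.GeneralLinearGroup.toLin A).toLinearEquiv.injective

/-- Let `G ⊆ PGL_n(k)` be a finite `p`-group with `p > n`, `k` algebraically closed of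
characteristic `0`. Then `G` has a fixed point on `P^{n-1}`. Here `G` is realized as a group
of permutations of `P^{n-1}` each of which is induced by an element of `GL_n(k)`. -/
theorem stmt10 (p n : ℕ) (hp : p.Prime) (hn : 1 ≤ n) (hpn : n < p)
    (k : Type*) [Field k] [IsAlgClosed k] [CharZero k]
    (G : Subgroup (Equiv.Perm (Projectivization k (Fin n → k)))) [Finite G]
    (hG : IsPGroup p G)
    (hlin : ∀ g ∈ G, ∃ A : GL (Fin n) k, ∀ x, g x = glAct A x) :
    ∃ x : Projectivization k (Fin n → k), ∀ g ∈ G, g x = x := by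
  classical
  haveI := Fact.mk hp
  haveI : Nonempty (Fin n) := ⟨⟨0, hn⟩⟩
  set V := (Fin n → k) with hVdef
  set M := Matrix (Fin n) (Fin n) k with hMdef
  set Φ : GL (Fin n) k →* (V ≃ₗ[k] V) :=
    (LinearMap.GeneralLinearGroup.generalLinearEquiv k V).toMonoidHom.comp
      (Matrix.GeneralLinearGroup.toLin (n := Fin n) (R := k)).toMonoidHom with hΦdef
  have hglAct : ∀ (A : GL (Fin n) k) (v : V) (hv : v ≠ 0),
      glAct A (Projectivization.mk k v hv)
        = Projectivization.mk k (Φ A v) ((Φ A).map_ne_zero_iff.mpr hv) := by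
    intro A v hv
    exact Projectivization.map_mk _ _ v hv
  set sc : kˣ →* GL (Fin n) k := Units.map (algebraMap k M).toMonoidHom with hscdef
  have hΦsc : ∀ (u : kˣ) (v : V), Φ (sc u) v = (u : k) • v := by
    intro u v
    show Matrix.toLinAlgEquiv' ((algebraMap k M) (u : k)) v = (u : k) • v
    rw [AlgEquiv.commutes]
    rfl
  have glAct_mk : ∀ (A : GL (Fin n) k) (v : V) (hv : v ≠ 0), True := fun _ _ _ => trivial
  have glAct_sc : ∀ (u : kˣ) (x : Projectivization k V), glAct (sc u) x = x := by
    intro u x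
    induction x using Projectivization.ind with
    | h v hv =>
      rw [hglAct]
      rw [Projectivization.mk_eq_mk_iff']
      exact ⟨(u : k), (hΦsc u v).symm⟩
  have glAct_mul : ∀ (A B : GL (Fin n) k) (x : Projectivization k V),
      glAct (A * B) x = glAct A (glAct B x) := by
    intro A B x
    induction x using Projectivization.ind with
    | h v hv =>
      rw [hglAct, hglAct, hglAct, map_mul]
      rfl
  have glAct_one : ∀ x : Projectivization k V, glAct (1 : GL (Fin n) k) x = x := by
    intro x
    induction x using Projectivization.ind with
    | h v hv =>
      rw [hglAct, map_one]
      rfl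
  have hsc_comm : ∀ (u : kˣ) (A : GL (Fin n) k), sc u * A = A * sc u := by
    intro u A
    apply Units.ext
    show (algebraMap k M) (u : k) * (A : M) = (A : M) * (algebraMap k M) (u : k)
    exact Algebra.commutes (u : k) (A : M)
  have hscinj : Function.Injective sc := by
    intro u w h
    have h1 : (algebraMap k M) (u : k) = (algebraMap k M) (w : k) := congrArg Units.val h
    have h2 := congrFun (congrFun h1 ⟨0, hn⟩) ⟨0, hn⟩
    rw [Matrix.algebraMap_matrix_apply, Matrix.algebraMap_matrix_apply] at h2
    simp only [if_pos rfl] at h2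
    exact Units.ext h2
  -- scalar recognition
  have hid : ∀ Mu : GL (Fin n) k, (∀ x, glAct Mu x = x) → ∃ u : kˣ, Mu = sc u := by
    intro Mu hMu
    have hone : (fun _ => (1 : k)) ≠ (0 : V) := by
      intro h
      have h1 := congrFun h ⟨0, hn⟩
      rw [Pi.zero_apply] at h1
      exact one_ne_zero h1
    have hf : ∀ v : V, v ≠ 0 → ∃ c : k, ((Φ Mu : V →ₗ[k] V)) v = c • v := by
      intro v hv
      have h1 := hMu (Projectivization.mk k v hv)
      rw [hglAct, Projectivization.mk_eq_mk_iff'] at h1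
      obtain ⟨a, ha⟩ := h1
      exact ⟨a, ha.symm⟩
    obtain ⟨c, hc⟩ := eq_smul_of_forall_smul ((Φ Mu : V →ₗ[k] V)) hf _ hone
    have hc0 : c ≠ 0 := by
      intro h0
      apply hone
      have h1 : Φ Mu (fun _ => (1:k)) = 0 := by
        rw [show Φ Mu (fun _ => (1:k)) = ((Φ Mu : V →ₗ[k] V)) (fun _ => (1:k)) from rfl, hc,
          h0, zero_smul]
      exact (LinearEquiv.map_eq_zero_iff _).mp h1
    refine ⟨Units.mk0 c hc0, ?_⟩
    apply Units.ext
    show (Mu : M) = (algebraMap k M) c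
    apply Matrix.toLinAlgEquiv'.injective
    apply LinearMap.ext
    intro v
    rw [AlgEquiv.commutes]
    have h2 : Matrix.toLinAlgEquiv' (Mu : M) v = ((Φ Mu : V →ₗ[k] V)) v := rfl
    rw [h2, hc v]
    rfl
  -- choice of lifts
  set Ach : ↥G → GL (Fin n) k := fun g => (hlin g.1 g.2).choose with hAchdef
  have hAch : ∀ (g : ↥G) (x : Projectivization k V), (g : Equiv.Perm (Projectivization k V)) x = glAct (Ach g) x :=
    fun g => (hlin g.1 g.2).choose_spec
  have hAmul : ∀ g h : ↥G, ∀ x, glAct (Ach g * Ach h) x = glAct (Ach (g * h)) x := by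
    intro g h x
    rw [glAct_mul, ← hAch, ← hAch, ← hAch]
    rfl
  have hexc : ∀ g h : ↥G, ∃ u : kˣ, (Ach g * Ach h) * (Ach (g * h))⁻¹ = sc u := by
    intro g h
    apply hid
    intro x
    calc glAct ((Ach g * Ach h) * (Ach (g * h))⁻¹) x
        = glAct (Ach g * Ach h) (glAct (Ach (g * h))⁻¹ x) := glAct_mul _ _ _
      _ = glAct (Ach (g * h)) (glAct (Ach (g * h))⁻¹ x) := hAmul g h _
      _ = glAct (Ach (g * h) * (Ach (g * h))⁻¹) x := (glAct_mul _ _ _).symm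
      _ = x := by rw [mul_inv_cancel]; exact glAct_one x
  choose co hco using hexc
  have hco' : ∀ g h : ↥G, Ach g * Ach h = sc (co g h) * Ach (g * h) := by
    intro g h
    rw [← hco g h, inv_mul_cancel_right]
  -- determinant
  set dt : GL (Fin n) k →* kˣ := Matrix.GeneralLinearGroup.det with hdtdef
  have hdt_sc : ∀ u : kˣ, dt (sc u) = u ^ n := by
    intro u
    apply Units.ext
    show Matrix.det ((algebraMap k M) (u : k)) = ((u : k)) ^ n
    rw [Algebra.algebraMap_eq_smul_one, Matrix.det_smul, Matrix.det_one, mul_one,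
      Fintype.card_fin]
  haveI := Fintype.ofFinite ↥G
  set N := Fintype.card ↥G with hNdef
  set μ : ↥G → kˣ := fun g => ∏ h : ↥G, co g h with hμdef
  set ν : ↥G → kˣ := fun g => dt (Ach g) with hνdef
  have hcoc : ∀ g h l : ↥G, co g h * co (g * h) l = co h l * co g (h * l) := by
    intro g h l
    have e1 : (Ach g * Ach h) * Ach l = sc (co g h * co (g * h) l) * Ach (g * h * l) := by
      rw [hco' g h, mul_assoc (sc (co g h)) (Ach (g * h)) (Ach l), hco' (g * h) l,
        ← mul_assoc, ← map_mul]
    have e2 : Ach g * (Ach h * Ach l) = sc (co h l * co g (h * l)) * Ach (g * (h * l)) := by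
      rw [hco' h l, ← mul_assoc (Ach g) (sc (co h l)) (Ach (h * l)), ← hsc_comm,
        mul_assoc, hco' g (h * l), ← mul_assoc, ← map_mul]
    have e3 : sc (co g h * co (g * h) l) * Ach (g * h * l)
        = sc (co h l * co g (h * l)) * Ach (g * h * l) := by
      rw [← e1]
      have : g * h * l = g * (h * l) := mul_assoc g h l
      rw [show Ach (g*h*l) = Ach (g*(h*l)) from by rw [this]]
      rw [← e2, mul_assoc]
    exact hscinj (mul_right_cancel e3)
  have hμrel : ∀ g h : ↥G, co g h ^ N * μ (g * h) = μ g * μ h := by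
    intro g h
    have c1 : co g h ^ N * μ (g * h) = ∏ l : ↥G, (co g h * co (g * h) l) := by
      rw [Finset.prod_mul_distrib, Finset.prod_const, Finset.card_univ, hNdef]
    have c2 : ∏ l : ↥G, (co g h * co (g * h) l) = ∏ l : ↥G, (co h l * co g (h * l)) :=
      Finset.prod_congr rfl fun l _ => hcoc g h l
    have c3 : ∏ l : ↥G, (co h l * co g (h * l)) = μ h * ∏ l : ↥G, co g (h * l) :=
      Finset.prod_mul_distrib
    have c4 : ∏ l : ↥G, co g (h * l) = μ g :=
      Fintype.prod_equiv (Equiv.mulLeft h) _ _ (fun l => rfl)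
    rw [c1, c2, c3, c4, mul_comm]
  have hνrel : ∀ g h : ↥G, co g h ^ n * ν (g * h) = ν g * ν h := by
    intro g h
    have c1 : dt (Ach g * Ach h) = dt (sc (co g h) * Ach (g * h)) := by rw [hco']
    rw [map_mul, map_mul, hdt_sc] at c1
    rw [← c1]
  -- Bezout
  have hcop : Nat.Coprime N n := by
    obtain ⟨m, hm⟩ := IsPGroup.iff_card.mp hG
    rw [hNdef, ← Nat.card_eq_fintype_card, hm]
    exact Nat.Coprime.pow_left m (hp.coprime_iff_not_dvd.mpr
      (fun hdvd => absurd (Nat.le_of_dvd (by omega) hdvd) (not_le.mpr hpn)))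
  have hbez : ∃ x y : ℕ, N * x = n * y + 1 := by
    have hN1 : 1 ≤ N := Fintype.card_pos
    have hφ : 0 < Nat.totient n := Nat.totient_pos.mpr (by omega)
    have hmod : N ^ Nat.totient n ≡ 1 [MOD n] := Nat.ModEq.pow_totient hcop
    have h1le : 1 ≤ N ^ Nat.totient n := Nat.one_le_pow _ _ (by omega)
    have hdvd : n ∣ N ^ Nat.totient n - 1 := (Nat.modEq_iff_dvd' h1le).mp hmod.symm
    obtain ⟨y, hy⟩ := hdvd
    refine ⟨N ^ (Nat.totient n - 1), y, ?_⟩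
    have : N * N ^ (Nat.totient n - 1) = N ^ Nat.totient n := by
      rw [← pow_succ']
      congr 1
      omega
    omega
  obtain ⟨x, y, hNx⟩ := hbez
  set f : ↥G → kˣ := fun g => (μ g ^ x)⁻¹ * ν g ^ y with hfdef
  have key : ∀ g h : ↥G, f g * f h * co g h = f (g * h) := by
    intro g h
    have hstar : ν g ^ y * ν h ^ y * co g h * μ (g * h) ^ x
        = μ g ^ x * μ h ^ x * ν (g * h) ^ y := by
      apply Units.ext
      have hμk := congrArg Units.val (hμrel g h)
      have hνk := congrArg Units.val (hνrel g h)
      push_cast at hμk hνk ⊢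
      set a := ((co g h : kˣ) : k)
      set m1 := ((μ g : kˣ) : k); set m2 := ((μ h : kˣ) : k); set m3 := ((μ (g*h) : kˣ) : k)
      set n1 := ((ν g : kˣ) : k); set n2 := ((ν h : kˣ) : k); set n3 := ((ν (g*h) : kˣ) : k)
      have e1 : (a ^ N * m3) ^ x = (m1 * m2) ^ x := by rw [hμk]
      have e2 : (a ^ n * n3) ^ y = (n1 * n2) ^ y := by rw [hνk]
      calc n1 ^ y * n2 ^ y * a * m3 ^ x
          = a * (n1 * n2) ^ y * m3 ^ x := by ring
        _ = a * (a ^ n * n3) ^ y * m3 ^ x := by rw [e2]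
        _ = a ^ (n * y + 1) * n3 ^ y * m3 ^ x := by ring
        _ = a ^ (N * x) * n3 ^ y * m3 ^ x := by rw [hNx]
        _ = (a ^ N * m3) ^ x * n3 ^ y := by ring
        _ = (m1 * m2) ^ x * n3 ^ y := by rw [e1]
        _ = m1 ^ x * m2 ^ x * n3 ^ y := by ring
    -- deduce key from hstar by cancellation
    have hgoal : (μ g ^ x * (μ h ^ x * μ (g*h) ^ x)) * (f g * f h * co g h)
        = (μ g ^ x * (μ h ^ x * μ (g*h) ^ x)) * f (g * h) := by
      rw [hfdef]
      simp only
      calc (μ g ^ x * (μ h ^ x * μ (g*h) ^ x)) *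
            ((μ g ^ x)⁻¹ * ν g ^ y * ((μ h ^ x)⁻¹ * ν h ^ y) * co g h)
          = (ν g ^ y * ν h ^ y * co g h * μ (g*h) ^ x) *
              ((μ g ^ x * (μ g ^ x)⁻¹) * (μ h ^ x * (μ h ^ x)⁻¹)) := by
            rw [mul_comm]
            apply Units.ext
            push_cast
            ring
        _ = ν g ^ y * ν h ^ y * co g h * μ (g*h) ^ x := by
            rw [mul_inv_cancel, mul_inv_cancel, mul_one, mul_one]
        _ = μ g ^ x * μ h ^ x * ν (g * h) ^ y := hstar
        _ = (μ g ^ x * (μ h ^ x * μ (g*h) ^ x)) * ((μ (g*h) ^ x)⁻¹ * ν (g*h) ^ y) := by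
            apply Units.ext
            push_cast
            field_simp
    exact mul_left_cancel hgoal
  set B : ↥G →* GL (Fin n) k := MonoidHom.mk' (fun g => sc (f g) * Ach g) (by
    intro g h
    calc sc (f (g * h)) * Ach (g * h) = sc (f g * f h * co g h) * Ach (g * h) := by rw [key]
      _ = sc (f g) * (sc (f h) * (sc (co g h) * Ach (g * h))) := by
          rw [map_mul, map_mul]; group
      _ = sc (f g) * (sc (f h) * (Ach g * Ach h)) := by rw [← hco']
      _ = sc (f g) * Ach g * (sc (f h) * Ach h) := by
          rw [← mul_assoc (sc (f h)) (Ach g) (Ach h), hsc_comm (f h) (Ach g)]; group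
    ) with hBdef
  have hBact : ∀ (g : ↥G) (xx : Projectivization k V),
      glAct (B g) xx = (g : Equiv.Perm (Projectivization k V)) xx := by
    intro g xx
    rw [hAch g xx]
    show glAct (sc (f g) * Ach g) xx = _
    rw [glAct_mul, glAct_sc]
  -- apply the main lemma
  have hfr : Module.finrank k V = n := Module.finrank_fin_fun k
  obtain ⟨v, hv0, hvc⟩ := mainL hp V ↥G hG (by rw [hfr]; omega) (by rw [hfr]; exact hpn)
    (Φ.comp B)
  refine ⟨Projectivization.mk k v hv0, fun g hg => ?_⟩
  obtain ⟨c, hc⟩ := hvc ⟨g, hg⟩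
  have h2 : (⟨g, hg⟩ : ↥G).1 (Projectivization.mk k v hv0)
      = glAct (B ⟨g, hg⟩) (Projectivization.mk k v hv0) := (hBact ⟨g, hg⟩ _).symm
  rw [show g (Projectivization.mk k v hv0)
      = (⟨g, hg⟩ : ↥G).1 (Projectivization.mk k v hv0) from rfl, h2, hglAct]
  rw [Projectivization.mk_eq_mk_iff']
  exact ⟨c, hc.symm⟩
end

section
/- Let G be a finite p-group with p ≥ 3 acting on P^1 × P^1 by automorphisms. Then G has a fixed point on P^1 × P^1. -/
open scoped MatrixGroups

section aux
set_option linter.unusedSectionVars false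
variable {k : Type*} [Field k] [IsAlgClosed k]

local notation "Pt" => Projectivization k (Fin 2 → k)

private lemma glAct_mk (A : GL (Fin 2) k) (v : Fin 2 → k) (hv : v ≠ 0)
    (hv2 : (Matrix.GeneralLinearGroup.toLin A).toLinearEquiv.toLinearMap v ≠ 0) :
    glAct A (Projectivization.mk k v hv) =
      Projectivization.mk k ((Matrix.GeneralLinearGroup.toLin A).toLinearEquiv.toLinearMap v) hv2 :=
  Projectivization.map_mk _ _ v hv

private lemma exists_glAct_fixed (A : GL (Fin 2) k) : ∃ x : Pt, glAct A x = x := by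
  set f := (Matrix.GeneralLinearGroup.toLin A).toLinearEquiv with hf
  obtain ⟨μ, hμ⟩ := Module.End.exists_eigenvalue (f.toLinearMap : Module.End k (Fin 2 → k))
  obtain ⟨v, hv⟩ := hμ.exists_hasEigenvector
  have hv0 : v ≠ 0 := hv.right
  have hfv : f.toLinearMap v = μ • v := hv.apply_eq_smul
  have hμ0 : μ ≠ 0 := by
    intro h
    subst h
    rw [zero_smul] at hfv
    exact hv0 (f.injective (by simpa using hfv))
  have hfv0 : f.toLinearMap v ≠ 0 := by
    rw [hfv]; exact smul_ne_zero hμ0 hv0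
  refine ⟨Projectivization.mk k v hv0, ?_⟩
  rw [glAct_mk A v hv0 hfv0, Projectivization.mk_eq_mk_iff]
  exact ⟨Units.mk0 μ hμ0, by simp only [Units.smul_def, Units.val_mk0]; exact hfv.symm⟩

private lemma glAct_fixed_iff (A : GL (Fin 2) k) (x : Pt) (h : glAct A x = x) :
    ∃ α : kˣ, (Matrix.GeneralLinearGroup.toLin A).toLinearEquiv.toLinearMap x.rep
      = (α : k) • x.rep := by
  set f := (Matrix.GeneralLinearGroup.toLin A).toLinearEquiv with hf
  have hr : x.rep ≠ 0 := x.rep_nonzero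
  have hfr : f.toLinearMap x.rep ≠ 0 := by
    intro h0
    exact hr (f.injective (by simpa using h0))
  have h2 : glAct A (Projectivization.mk k x.rep hr) = Projectivization.mk k x.rep hr := by
    rw [Projectivization.mk_rep, h]
  rw [glAct_mk A x.rep hr hfr, Projectivization.mk_eq_mk_iff] at h2
  obtain ⟨α, hα⟩ := h2
  exact ⟨α, hα.symm⟩

private lemma glAct_eq_id_of_three_fixed {A : GL (Fin 2) k} {a b c : Pt}
    (hab : a ≠ b) (hac : a ≠ c) (hbc : b ≠ c)
    (ha : glAct A a = a) (hb : glAct A b = b) (hc : glAct A c = c) :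
    ∀ x : Pt, glAct A x = x := by
  set f := (Matrix.GeneralLinearGroup.toLin A).toLinearEquiv with hf
  obtain ⟨α, hα⟩ := glAct_fixed_iff A a ha
  obtain ⟨β, hβ⟩ := glAct_fixed_iff A b hb
  obtain ⟨γ, hγ⟩ := glAct_fixed_iff A c hc
  set u := a.rep with hu
  set v := b.rep with hv
  set w := c.rep with hw
  have hu0 : u ≠ 0 := a.rep_nonzero
  have hv0 : v ≠ 0 := b.rep_nonzero
  have hw0 : w ≠ 0 := c.rep_nonzero
  have hprop : ∀ s : k, s • u ≠ v := by
    intro s hs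
    apply hab
    rw [← a.mk_rep, ← b.mk_rep]
    exact ((Projectivization.mk_eq_mk_iff' k _ _ hv0 hu0).mpr ⟨s, hs⟩).symm
  have hLI : LinearIndependent k ![u, v] := (LinearIndependent.pair_iff' hu0).mpr hprop
  have hspan : Submodule.span k (Set.range ![u, v]) = ⊤ :=
    hLI.span_eq_top_of_card_eq_finrank (by simp [Module.finrank_fin_fun])
  have hrange : Set.range ![u, v] = {u, v} := by
    ext z
    simp [Fin.exists_fin_two, or_comm]
  rw [hrange] at hspan
  have hmem : ∀ z : Fin 2 → k, ∃ s t : k, s • u + t • v = z := by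
    intro z
    have : z ∈ Submodule.span k ({u, v} : Set (Fin 2 → k)) := by rw [hspan]; trivial
    exact Submodule.mem_span_pair.mp this
  obtain ⟨s, t, hst⟩ := hmem w
  have hs0 : s ≠ 0 := by
    rintro rfl
    rw [zero_smul, zero_add] at hst
    have : c = b := by
      rw [← b.mk_rep, ← c.mk_rep]
      exact (Projectivization.mk_eq_mk_iff' k _ _ hw0 hv0).mpr ⟨t, hst⟩
    exact hbc this.symm
  have ht0 : t ≠ 0 := by
    rintro rfl
    rw [zero_smul, add_zero] at hst
    have : c = a := by
      rw [← a.mk_rep, ← c.mk_rep]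
      exact (Projectivization.mk_eq_mk_iff' k _ _ hw0 hu0).mpr ⟨s, hst⟩
    exact hac this.symm
  have h2 : s • ((α:k) • u) + t • ((β:k) • v) = (γ:k) • (s • u) + (γ:k) • (t • v) := by
    have h2 := hγ
    rw [← hst] at h2
    simp only [map_add, map_smul, LinearEquiv.coe_coe, smul_add] at h2 hα hβ
    rw [hα, hβ] at h2
    exact h2
  have h1 : ((s * α - γ * s) : k) • u + ((t * β - γ * t) : k) • v = 0 := by
    have h3 := sub_eq_zero.mpr h2
    rw [← h3]
    module
  obtain ⟨e1, e2⟩ := hLI.eq_zero_of_pair h1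
  have hαγ : (α:k) = γ := by
    have h4 : s * (α:k) = s * (γ:k) := by linear_combination e1
    exact mul_left_cancel₀ hs0 h4
  have hβγ : (β:k) = γ := by
    have h4 : t * (β:k) = t * (γ:k) := by linear_combination e2
    exact mul_left_cancel₀ ht0 h4
  intro x
  obtain ⟨s', t', hx⟩ := hmem x.rep
  have hfx : f.toLinearMap x.rep = (α:k) • x.rep := by
    rw [← hx]
    simp only [map_add, map_smul, LinearEquiv.coe_coe] at hα hβ ⊢
    rw [hα, hβ, hαγ, hβγ]
    module
  have hfx0 : f.toLinearMap x.rep ≠ 0 := by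
    rw [hfx]
    exact smul_ne_zero (α.ne_zero) x.rep_nonzero
  conv_lhs => rw [← x.mk_rep]
  rw [glAct_mk A x.rep x.rep_nonzero hfx0]
  conv_rhs => rw [← x.mk_rep]
  rw [Projectivization.mk_eq_mk_iff]
  exact ⟨α, hfx.symm⟩

end aux

section aux2

private lemma perm_pow_odd_swap {α : Type*} (e : Equiv.Perm α) {a b : α}
    (hab : e a = b) (hba : e b = a) (m : ℕ) : (e ^ (2 * m + 1)) a = b := by
  induction m with
  | zero => simpa using hab
  | succ n ih =>
    have h : 2 * (n + 1) + 1 = (2 * n + 1) + 1 + 1 := by ring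
    rw [h, pow_succ, pow_succ, Equiv.Perm.mul_apply, Equiv.Perm.mul_apply, hab, hba, ih]

private lemma exists_two_points {k : Type*} [Field k] :
    ∃ x y : Projectivization k (Fin 2 → k), x ≠ y := by
  have h0 : (Pi.single 0 1 : Fin 2 → k) ≠ 0 := by
    intro h
    have := congrFun h 0
    simp at this
  have h1 : (Pi.single 1 1 : Fin 2 → k) ≠ 0 := by
    intro h
    have := congrFun h 1
    simp at this
  refine ⟨Projectivization.mk k _ h0, Projectivization.mk k _ h1, ?_⟩
  intro h
  obtain ⟨s, hs⟩ := (Projectivization.mk_eq_mk_iff' k _ _ h0 h1).mp h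
  have := congrFun hs 0
  simp [Pi.single_apply] at this

end aux2

section key
set_option linter.unusedSectionVars false
variable {k : Type*} [Field k] [IsAlgClosed k]

local notation "Pt" => Projectivization k (Fin 2 → k)

private lemma key_factor (p : ℕ) (hp : p.Prime) (hp3 : 3 ≤ p)
    (H : Subgroup (Equiv.Perm Pt)) [Finite H] (hH : IsPGroup p H)
    (hlin : ∀ h ∈ H, ∃ A : GL (Fin 2) k, ∀ x, h x = glAct A x) :
    ∃ a : Pt, ∀ h ∈ H, h a = a := by
  have podd : Odd p := hp.odd_of_ne_two (by omega)
  have hord : ∀ h ∈ H, ∃ m : ℕ, h ^ (2 * m + 1) = 1 := by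
    intro h hh
    obtain ⟨n, hn⟩ := hH ⟨h, hh⟩
    obtain ⟨m, hm⟩ := podd.pow (n := n)
    refine ⟨m, ?_⟩
    rw [← hm]
    have := congrArg (Subgroup.subtype H) hn
    simpa using this
  by_cases htriv : ∀ h ∈ H, h = 1
  · obtain ⟨x, y, -⟩ := exists_two_points (k := k)
    exact ⟨x, fun h hh => by rw [htriv h hh]; rfl⟩
  push_neg at htriv
  obtain ⟨h₀, hh₀, hne₀⟩ := htriv
  have : Nontrivial H := ⟨⟨h₀, hh₀⟩, 1, by simpa [Subtype.ext_iff] using hne₀⟩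
  have : Fact p.Prime := ⟨hp⟩
  have hcn : Nontrivial (Subgroup.center H) := hH.center_nontrivial
  obtain ⟨z, hz1⟩ := exists_ne (1 : Subgroup.center H)
  set ζ : Equiv.Perm Pt := ((z : H) : Equiv.Perm Pt) with hζ
  have hζH : ζ ∈ H := (z : H).2
  have hζ1 : ζ ≠ 1 := by
    intro h
    exact hz1 (Subtype.ext (Subtype.ext h))
  have hcomm : ∀ h ∈ H, ∀ x, ζ (h x) = h (ζ x) := by
    intro h hh x
    have := Subgroup.mem_center_iff.mp z.2 ⟨h, hh⟩
    have h2 : (⟨h, hh⟩ * (z:H) : H) = ((z:H) * ⟨h, hh⟩ : H) := this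
    have h3 := congrArg (fun (w : H) => (w : Equiv.Perm Pt) x) h2
    simpa [Equiv.Perm.mul_apply] using h3.symm
  obtain ⟨A, hA⟩ := hlin ζ hζH
  obtain ⟨a, haf⟩ := exists_glAct_fixed A
  have ha : ζ a = a := by rw [hA]; exact haf
  by_cases hb : ∃ b, ζ b = b ∧ b ≠ a
  · obtain ⟨b, hbfix, hba⟩ := hb
    have hmem : ∀ x, ζ x = x → x = a ∨ x = b := by
      intro c hcfix
      by_contra hcc
      push_neg at hcc
      have h3 := glAct_eq_id_of_three_fixed (A := A) (Ne.symm hba) (Ne.symm hcc.1)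
        (Ne.symm hcc.2) (hA a ▸ ha) (hA b ▸ hbfix) (hA c ▸ hcfix)
      exact hζ1 (Equiv.ext fun x => by rw [hA x, h3 x]; rfl)
    refine ⟨a, fun h hh => ?_⟩
    have hfa : ζ (h a) = h a := by rw [hcomm h hh a, ha]
    rcases hmem _ hfa with h1 | h2
    · exact h1
    · exfalso
      have hfb : ζ (h b) = h b := by rw [hcomm h hh b, hbfix]
      rcases hmem _ hfb with h3 | h4
      · obtain ⟨m, hm⟩ := hord h hh
        have hp2 := perm_pow_odd_swap h h2 h3 m
        rw [hm] at hp2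
        exact hba (by simpa using hp2.symm)
      · exact hba (h.injective (h2.trans h4.symm)).symm
  · push_neg at hb
    refine ⟨a, fun h hh => ?_⟩
    exact hb _ (by rw [hcomm h hh a, ha])

end key

/-- Let `G` be a finite `p`-group with `p ≥ 3` acting on `P^1 × P^1` by automorphisms: every
element of `G` either acts as a pair of elements of `PGL_2(k)` on the two factors, or composes
such a pair with the swap of the two factors. Then `G` has a fixed point on `P^1 × P^1`. -/
theorem stmt12 (p : ℕ) (hp : p.Prime) (hp3 : 3 ≤ p)
    (k : Type*) [Field k] [IsAlgClosed k] [CharZero k]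
    (G : Subgroup (Equiv.Perm (Projectivization k (Fin 2 → k) × Projectivization k (Fin 2 → k))))
    [Finite G] (hG : IsPGroup p G)
    (haut : ∀ g ∈ G,
      (∃ A B : GL (Fin 2) k, ∀ x y, g (x, y) = (glAct A x, glAct B y)) ∨
      (∃ A B : GL (Fin 2) k, ∀ x y, g (x, y) = (glAct A y, glAct B x))) :
    ∃ z : Projectivization k (Fin 2 → k) × Projectivization k (Fin 2 → k),
      ∀ g ∈ G, g z = z := by

  classical
  obtain ⟨q0, q1, hq⟩ := exists_two_points (k := k)
  have podd : Odd p := hp.odd_of_ne_two (by omega)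
  -- Step 1: no element of G swaps the factors
  have hpair : ∀ g ∈ G, ∃ A B : GL (Fin 2) k, ∀ x y, g (x, y) = (glAct A x, glAct B y) := by
    intro g hg
    rcases haut g hg with h | h
    · exact h
    exfalso
    obtain ⟨A, B, hAB⟩ := h
    obtain ⟨n, hn⟩ := hG ⟨g, hg⟩
    obtain ⟨m, hm⟩ := podd.pow (n := n)
    have hg1 : g ^ (2 * m + 1) = 1 := by
      rw [← hm]
      have := congrArg (Subgroup.subtype G) hn
      simpa using this
    have key : ∀ m : ℕ, ∃ Φ Ψ : Projectivization k (Fin 2 → k) → Projectivization k (Fin 2 → k),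
        ∀ x y, (g ^ (2 * m + 1)) (x, y) = (Φ y, Ψ x) := by
      intro m
      induction m with
      | zero => exact ⟨fun y => glAct A y, fun x => glAct B x, by simpa using hAB⟩
      | succ n ih =>
        obtain ⟨Φ, Ψ, hΦΨ⟩ := ih
        refine ⟨fun y => Φ (glAct B (glAct A y)), fun x => Ψ (glAct A (glAct B x)), fun x y => ?_⟩
        have h1 : 2 * (n + 1) + 1 = (2 * n + 1) + 1 + 1 := by ring
        rw [h1, pow_succ, pow_succ, Equiv.Perm.mul_apply, Equiv.Perm.mul_apply, hAB]
        simp [hAB, hΦΨ]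
    obtain ⟨Φ, Ψ, hΦΨ⟩ := key m
    rw [hg1] at hΦΨ
    have h1 := hΦΨ q0 q0
    have h2 := hΦΨ q1 q0
    simp only [Equiv.Perm.one_apply] at h1 h2
    exact hq ((Prod.ext_iff.mp h1).1.trans (Prod.ext_iff.mp h2).1.symm)
  set y₀ := q0 with hy₀
  -- the permutation induced on the first factor
  have hLR : ∀ g h : G, g * h = 1 →
      ∀ x, (g.1 ((h.1 (x, y₀)).1, y₀)).1 = x := by
    intro g h hgh x
    obtain ⟨A, B, hgf⟩ := hpair g g.2
    obtain ⟨C, D, hhf⟩ := hpair h h.2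
    have hid : g.1 (h.1 (x, y₀)) = (x, y₀) := by
      rw [← Equiv.Perm.mul_apply, ← Subgroup.coe_mul, hgh, Subgroup.coe_one, Equiv.Perm.one_apply]
    rw [hhf, hgf] at hid
    simp only [hhf, hgf]
    simpa using (Prod.ext_iff.mp hid).1
  let F : G → Equiv.Perm (Projectivization k (Fin 2 → k)) := fun g =>
    { toFun := fun x => (g.1 (x, y₀)).1
      invFun := fun x => ((g⁻¹ : G).1 (x, y₀)).1
      left_inv := fun x => hLR g⁻¹ g (inv_mul_cancel g) x
      right_inv := fun x => hLR g g⁻¹ (mul_inv_cancel g) x }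
  have hFmul : ∀ g h : G, F (g * h) = F g * F h := by
    intro g h
    ext x
    obtain ⟨A, B, hgf⟩ := hpair g g.2
    obtain ⟨C, D, hhf⟩ := hpair h h.2
    show ((g * h : G).1 (x, y₀)).1
      = (g.1 (((h.1 (x, y₀)).1), y₀)).1
    rw [Subgroup.coe_mul, Equiv.Perm.mul_apply]
    simp [hhf, hgf]
  let φ₁ : G →* Equiv.Perm (Projectivization k (Fin 2 → k)) := MonoidHom.mk' F hFmul
  -- the permutation induced on the second factor
  have hLR₂ : ∀ g h : G, g * h = 1 →
      ∀ y, (g.1 (y₀, (h.1 (y₀, y)).2)).2 = y := by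
    intro g h hgh y
    obtain ⟨A, B, hgf⟩ := hpair g g.2
    obtain ⟨C, D, hhf⟩ := hpair h h.2
    have hid : g.1 (h.1 (y₀, y)) = (y₀, y) := by
      rw [← Equiv.Perm.mul_apply, ← Subgroup.coe_mul, hgh, Subgroup.coe_one, Equiv.Perm.one_apply]
    rw [hhf, hgf] at hid
    simp only [hhf, hgf]
    simpa using (Prod.ext_iff.mp hid).2
  let F₂ : G → Equiv.Perm (Projectivization k (Fin 2 → k)) := fun g =>
    { toFun := fun y => (g.1 (y₀, y)).2
      invFun := fun y => ((g⁻¹ : G).1 (y₀, y)).2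
      left_inv := fun y => hLR₂ g⁻¹ g (inv_mul_cancel g) y
      right_inv := fun y => hLR₂ g g⁻¹ (mul_inv_cancel g) y }
  have hFmul₂ : ∀ g h : G, F₂ (g * h) = F₂ g * F₂ h := by
    intro g h
    ext y
    obtain ⟨A, B, hgf⟩ := hpair g g.2
    obtain ⟨C, D, hhf⟩ := hpair h h.2
    show ((g * h : G).1 (y₀, y)).2
      = (g.1 (y₀, ((h.1 (y₀, y)).2))).2
    rw [Subgroup.coe_mul, Equiv.Perm.mul_apply]
    simp [hhf, hgf]
  let φ₂ : G →* Equiv.Perm (Projectivization k (Fin 2 → k)) := MonoidHom.mk' F₂ hFmul₂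
  -- apply the one-factor result to both ranges
  haveI hfin1 : Finite φ₁.range := Finite.of_surjective _ φ₁.rangeRestrict_surjective
  haveI hfin2 : Finite φ₂.range := Finite.of_surjective _ φ₂.rangeRestrict_surjective
  have hH1 : IsPGroup p φ₁.range := by
    rintro ⟨x, g, rfl⟩
    obtain ⟨n, hn⟩ := hG g
    exact ⟨n, Subtype.ext (by rw [SubmonoidClass.coe_pow, ← map_pow, hn, map_one]; rfl)⟩
  have hH2 : IsPGroup p φ₂.range := by
    rintro ⟨x, g, rfl⟩
    obtain ⟨n, hn⟩ := hG g
    exact ⟨n, Subtype.ext (by rw [SubmonoidClass.coe_pow, ← map_pow, hn, map_one]; rfl)⟩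
  have hlin1 : ∀ h ∈ φ₁.range, ∃ A : GL (Fin 2) k, ∀ x, h x = glAct A x := by
    rintro h ⟨g, rfl⟩
    obtain ⟨A, B, hgf⟩ := hpair g g.2
    refine ⟨A, fun x => ?_⟩
    show (g.1 (x, y₀)).1 = glAct A x
    rw [hgf]
  have hlin2 : ∀ h ∈ φ₂.range, ∃ A : GL (Fin 2) k, ∀ y, h y = glAct A y := by
    rintro h ⟨g, rfl⟩
    obtain ⟨A, B, hgf⟩ := hpair g g.2
    refine ⟨B, fun y => ?_⟩
    show (g.1 (y₀, y)).2 = glAct B y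
    rw [hgf]
  obtain ⟨a, hafix⟩ := key_factor p hp hp3 φ₁.range hH1 hlin1
  obtain ⟨b, hbfix⟩ := key_factor p hp hp3 φ₂.range hH2 hlin2
  refine ⟨(a, b), fun g hg => ?_⟩
  obtain ⟨A, B, hgf⟩ := hpair g hg
  have h1 : glAct A a = a := by
    have := hafix (φ₁ ⟨g, hg⟩) ⟨⟨g, hg⟩, rfl⟩
    have h2 : (g (a, y₀)).1 = a := this
    rw [hgf] at h2
    simpa using h2
  have h2 : glAct B b = b := by
    have := hbfix (φ₂ ⟨g, hg⟩) ⟨⟨g, hg⟩, rfl⟩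
    have h3 : (g (y₀, b)).2 = b := this
    rw [hgf] at h3
    simpa using h3
  rw [hgf a b, h1, h2]
end
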